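/- Let J be a symmetric real n×n matrix with zero diagonal and J_{ij} ≥ 0 for all i,j, and let h ∈ R^n with h_i ≥ 0 for all i. In the Ising model μ(J,h), for any indices 1 ≤ i,j,k ≤ n: (a) Cov(X_i, X_j) ≥ 0, and (b) E[X_i X_j X_k] − E[X_i X_k]E[X_j] − E[X_i]E[X_j X_k] − E[X_i X_j]E[X_k] + 2·E[X_i]E[X_j]E[X_k] ≤ 0, where expectations are with respect to μ(J,h). (These are respectively the second and third partial derivatives of log Z(h) in the coordinates h_j and h_j,h_k, establishing the smooth monotone submodularity of the magnetization h ↦ E_{μ(J,h)}[X_i] on the nonnegative orthant.) -/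

import Mathlib

open Finset
open scoped BigOperators Classical

noncomputable section

/-- The value of a spin: `true ↦ 1`, `false ↦ -1`. -/
def spin (b : Bool) : ℝ := if b then 1 else -1

/-- Boltzmann weight of a configuration of the Ising model `μ(J,h)`. -/
def isingWeight (n : ℕ) (J : Fin n → Fin n → ℝ) (h : Fin n → ℝ) (x : Fin n → Bool) : ℝ :=
  Real.exp ((1 / 2) * (∑ a, ∑ b, J a b * spin (x a) * spin (x b)) + ∑ a, h a * spin (x a))

/-- Expectation of `f` with respect to the Ising model `μ(J,h)`. -/
def isingE (n : ℕ) (J : Fin n → Fin n → ℝ) (h : Fin n → ℝ) (f : (Fin n → Bool) → ℝ) : ℝ :=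
  (∑ x : Fin n → Bool, f x * isingWeight n J h x) / (∑ x : Fin n → Bool, isingWeight n J h x)

/-! ### Master GKS-type lemma -/

lemma master {n : ℕ} {B ι' ι : Type} [Fintype B] [Fintype ι'] [Fintype ι]
    (V : ι' → B → ℝ) (g : Fin n → ι' → ℕ) (c : ι → ℝ) (hc : ∀ t, 0 ≤ c t)
    (E : ι → Fin n → ι' → ℕ) (s : ℝ)
    (hM : ∀ e : Fin n → ι' → ℕ,
      (∃ (m : ℕ) (f : Fin m → ι), e = fun a v => g a v + ∑ l, E (f l) a v) →
      0 ≤ s * ∏ a, ∑ b : B, ∏ v, V v b ^ e a v) :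
    0 ≤ s * ∑ x : Fin n → B,
      (∏ a, ∏ v, V v (x a) ^ g a v) *
        Real.exp (∑ t, c t * ∏ a, ∏ v, V v (x a) ^ E t a v) := by
  set G : (Fin n → B) → ℝ := fun x => ∏ a, ∏ v, V v (x a) ^ g a v with hG
  set H : (Fin n → B) → ℝ := fun x => ∑ t, c t * ∏ a, ∏ v, V v (x a) ^ E t a v with hH
  have combine : ∀ (m : ℕ) (f : Fin m → ι) (x : Fin n → B),
      G x * ∏ l, ∏ a, ∏ v, V v (x a) ^ E (f l) a v
        = ∏ a, ∏ v, V v (x a) ^ (g a v + ∑ l, E (f l) a v) := by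
    intro m f x
    simp only [pow_add, Finset.prod_mul_distrib, hG]
    congr 1
    simp only [← Finset.prod_pow_eq_pow_sum]
    rw [Finset.prod_comm]
    exact Finset.prod_congr rfl fun a _ => Finset.prod_comm
  have sumx : ∀ e : Fin n → ι' → ℕ,
      ∑ x : Fin n → B, ∏ a, ∏ v, V v (x a) ^ e a v
        = ∏ a, ∑ b : B, ∏ v, V v b ^ e a v := by
    intro e
    rw [← Finset.sum_prod_piFinset (univ : Finset B) (fun a b => ∏ v, V v b ^ e a v),
      Fintype.piFinset_univ]
  have key : ∀ m : ℕ, 0 ≤ ∑ x : Fin n → B, s * (G x * (H x ^ m / m.factorial)) := by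
    intro m
    have hpow : ∀ x, H x ^ m = ∑ f ∈ Fintype.piFinset (fun _ : Fin m => (univ : Finset ι)),
        ∏ l, (c (f l) * ∏ a, ∏ v, V v (x a) ^ E (f l) a v) := by
      intro x; exact Finset.sum_pow' _ _ m
    have step1 : ∀ x : Fin n → B, s * (G x * (H x ^ m / m.factorial)) =
        ∑ f ∈ Fintype.piFinset (fun _ : Fin m => (univ : Finset ι)),
          (((m.factorial : ℝ))⁻¹ * ∏ l, c (f l)) *
            (s * ∏ a, ∏ v, V v (x a) ^ (g a v + ∑ l, E (f l) a v)) := by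
      intro x
      rw [hpow x, Finset.sum_div, Finset.mul_sum, Finset.mul_sum]
      refine Finset.sum_congr rfl fun f _ => ?_
      rw [Finset.prod_mul_distrib, ← combine m f x]
      field_simp
    rw [Finset.sum_congr rfl (fun x _ => step1 x), Finset.sum_comm]
    refine Finset.sum_nonneg fun f _ => ?_
    rw [← Finset.mul_sum]
    have : ∑ x : Fin n → B, (s * ∏ a, ∏ v, V v (x a) ^ (g a v + ∑ l, E (f l) a v))
        = s * ∏ a, ∑ b : B, ∏ v, V v b ^ (g a v + ∑ l, E (f l) a v) := by
      rw [← Finset.mul_sum, sumx]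
    rw [this]
    exact mul_nonneg (mul_nonneg (by positivity) (Finset.prod_nonneg fun l _ => hc (f l)))
      (hM _ ⟨m, f, rfl⟩)
  have hexp : ∀ x, Real.exp (H x) = ∑' m : ℕ, H x ^ m / m.factorial := by
    intro x
    rw [Real.exp_eq_exp_ℝ, NormedSpace.exp_eq_tsum_div]
  have hsummable : ∀ x : Fin n → B,
      Summable (fun m : ℕ => s * (G x * (H x ^ m / m.factorial))) := fun x =>
    ((Real.summable_pow_div_factorial (H x)).mul_left (G x)).mul_left s
  have final : s * ∑ x : Fin n → B, G x * Real.exp (H x)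
      = ∑' m : ℕ, ∑ x : Fin n → B, s * (G x * (H x ^ m / m.factorial)) := by
    rw [Finset.mul_sum]
    rw [Summable.tsum_finsetSum (fun x _ => hsummable x)]
    refine Finset.sum_congr rfl fun x _ => ?_
    rw [hexp x, ← tsum_mul_left, ← tsum_mul_left]
  rw [final]
  exact tsum_nonneg key

/-! ### indicator-product helpers -/

lemma prod_pow_single {n : ℕ} {ι' : Type} [Fintype ι'] [DecidableEq ι'] (F : Fin n → ι' → ℝ) (i : Fin n) (v : ι') :
    (∏ a, ∏ v', F a v' ^ (if a = i ∧ v' = v then 1 else 0)) = F i v := by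
  have h : ∀ a, (∏ v', F a v' ^ (if a = i ∧ v' = v then 1 else 0)) =
      if a = i then F a v else 1 := by
    intro a
    by_cases h : a = i <;> simp [h]
  rw [Finset.prod_congr rfl (fun a _ => h a)]
  simp

lemma prod_pow_pair {n : ℕ} {ι' : Type} [Fintype ι'] [DecidableEq ι'] (F : Fin n → ι' → ℝ) (i j : Fin n) (v w : ι') :
    (∏ a, ∏ v', F a v' ^ ((if a = i ∧ v' = v then 1 else 0) + (if a = j ∧ v' = w then 1 else 0)))
      = F i v * F j w := by
  simp only [pow_add, Finset.prod_mul_distrib, prod_pow_single]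

lemma prod_pow_triple {n : ℕ} {ι' : Type} [Fintype ι'] [DecidableEq ι'] (F : Fin n → ι' → ℝ) (i j k : Fin n)
    (v w u : ι') :
    (∏ a, ∏ v', F a v' ^ ((if a = i ∧ v' = v then 1 else 0) + (if a = j ∧ v' = w then 1 else 0)
        + (if a = k ∧ v' = u then 1 else 0)))
      = F i v * F j w * F k u := by
  simp only [pow_add, Finset.prod_mul_distrib, prod_pow_single]

/-! ### two-copy observables -/

def tq : Bool → (Bool × Bool) → ℝ := fun v p =>
  if v then (spin p.1 - spin p.2) / 2 else (spin p.1 + spin p.2) / 2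

lemma hplus (m : ℕ) : (0:ℝ) ≤ 1 + (-1) ^ m := by
  rcases Nat.even_or_odd m with hm | hm
  · rw [hm.neg_one_pow]; norm_num
  · rw [hm.neg_one_pow]; norm_num

lemma hminus (m : ℕ) : (0:ℝ) ≤ 1 - (-1) ^ m := by
  rcases Nat.even_or_odd m with hm | hm
  · rw [hm.neg_one_pow]; norm_num
  · rw [hm.neg_one_pow]; norm_num

lemma tq_moment (e : Bool → ℕ) : 0 ≤ ∑ p : Bool × Bool, ∏ v, tq v p ^ e v := by
  rw [Fintype.sum_prod_type]
  simp only [Fintype.sum_bool, Fintype.prod_bool, tq, spin]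
  norm_num
  have A := mul_nonneg (pow_nonneg (le_refl (0:ℝ)) (e true)) (hplus (e false))
  have B := mul_nonneg (pow_nonneg (le_refl (0:ℝ)) (e false)) (hplus (e true))
  nlinarith [A, B]

/-! ### four-copy observables -/

def uvwz : Fin 4 → ((Bool × Bool) × (Bool × Bool)) → ℝ :=
  ![fun p => (spin p.1.1 + spin p.1.2 + spin p.2.1 + spin p.2.2) / 2,
    fun p => (spin p.1.1 - spin p.1.2 + spin p.2.1 - spin p.2.2) / 2,
    fun p => (spin p.1.1 + spin p.1.2 - spin p.2.1 - spin p.2.2) / 2,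
    fun p => (spin p.1.1 - spin p.1.2 - spin p.2.1 + spin p.2.2) / 2]

lemma neg_two_pow (m : ℕ) : ((-2 : ℝ)) ^ m = (-1) ^ m * 2 ^ m := by
  rw [show ((-2:ℝ)) = -1 * 2 by norm_num, mul_pow]

lemma uvwz_moment_even (e : Fin 4 → ℕ) (h2 : Even (e 2)) :
    0 ≤ ∑ p : (Bool × Bool) × (Bool × Bool), ∏ v, uvwz v p ^ e v := by
  rw [Fintype.sum_prod_type]
  simp only [Fintype.sum_prod_type, Fintype.sum_bool, Fin.prod_univ_four, uvwz, spin,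
    Matrix.cons_val_zero, Matrix.cons_val_one, Matrix.head_cons, Matrix.cons_val_two,
    Matrix.tail_cons, Matrix.cons_val_three]
  norm_num
  rw [neg_two_pow (e 0), neg_two_pow (e 1), neg_two_pow (e 2), neg_two_pow (e 3),
    h2.neg_one_pow]
  have z0 : (0:ℝ) ≤ 0 ^ e 0 := pow_nonneg le_rfl _
  have z1 : (0:ℝ) ≤ 0 ^ e 1 := pow_nonneg le_rfl _
  have z2 : (0:ℝ) ≤ 0 ^ e 2 := pow_nonneg le_rfl _
  have z3 : (0:ℝ) ≤ 0 ^ e 3 := pow_nonneg le_rfl _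
  have t0 : (0:ℝ) ≤ 2 ^ e 0 := by positivity
  have t1 : (0:ℝ) ≤ 2 ^ e 1 := by positivity
  have t2 : (0:ℝ) ≤ 2 ^ e 2 := by positivity
  have t3 : (0:ℝ) ≤ 2 ^ e 3 := by positivity
  have A0 : (0:ℝ) ≤ 0 ^ e 1 * 0 ^ e 2 * 0 ^ e 3 * (2 ^ e 0 * (1 + (-1) ^ e 0)) :=
    mul_nonneg (mul_nonneg (mul_nonneg z1 z2) z3) (mul_nonneg t0 (hplus _))
  have A1 : (0:ℝ) ≤ 0 ^ e 0 * 0 ^ e 2 * 0 ^ e 3 * (2 ^ e 1 * (1 + (-1) ^ e 1)) :=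
    mul_nonneg (mul_nonneg (mul_nonneg z0 z2) z3) (mul_nonneg t1 (hplus _))
  have A2 : (0:ℝ) ≤ 0 ^ e 0 * 0 ^ e 1 * 0 ^ e 3 * 2 ^ e 2 :=
    mul_nonneg (mul_nonneg (mul_nonneg z0 z1) z3) t2
  have A3 : (0:ℝ) ≤ 0 ^ e 0 * 0 ^ e 1 * 0 ^ e 2 * (2 ^ e 3 * (1 + (-1) ^ e 3)) :=
    mul_nonneg (mul_nonneg (mul_nonneg z0 z1) z2) (mul_nonneg t3 (hplus _))
  have P1 : (0:ℝ) ≤ (1 + (-1) ^ e 0) * (1 + (-1) ^ e 1) * (1 + (-1) ^ e 3) :=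
    mul_nonneg (mul_nonneg (hplus _) (hplus _)) (hplus _)
  nlinarith [A0, A1, A2, A3, P1]

lemma uvwz_moment_odd (e : Fin 4 → ℕ) (h2 : Odd (e 2)) :
    ∑ p : (Bool × Bool) × (Bool × Bool), ∏ v, uvwz v p ^ e v ≤ 0 := by
  rw [Fintype.sum_prod_type]
  simp only [Fintype.sum_prod_type, Fintype.sum_bool, Fin.prod_univ_four, uvwz, spin,
    Matrix.cons_val_zero, Matrix.cons_val_one, Matrix.head_cons, Matrix.cons_val_two,
    Matrix.tail_cons, Matrix.cons_val_three]
  norm_num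
  rw [neg_two_pow (e 0), neg_two_pow (e 1), neg_two_pow (e 2), neg_two_pow (e 3),
    h2.neg_one_pow, zero_pow h2.pos.ne']
  have P1 : (0:ℝ) ≤ (1 - (-1) ^ e 0) * (1 - (-1) ^ e 1) * (1 - (-1) ^ e 3) :=
    mul_nonneg (mul_nonneg (hminus _) (hminus _)) (hminus _)
  nlinarith [P1]

/-! ### parity-sign product -/

lemma prod_sign_of_parity {α : Type*} [Fintype α] (M : α → ℝ) (p : α → ℕ)
    (hE : ∀ a, Even (p a) → 0 ≤ M a) (hO : ∀ a, Odd (p a) → M a ≤ 0) :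
    ∀ s : Finset α, (Even (∑ a ∈ s, p a) → 0 ≤ ∏ a ∈ s, M a) ∧
      (Odd (∑ a ∈ s, p a) → ∏ a ∈ s, M a ≤ 0) := by
  intro s
  induction s using Finset.induction_on with
  | empty => simp
  | insert a s hnotmem ih =>
    rw [Finset.sum_insert hnotmem, Finset.prod_insert hnotmem]
    constructor
    · intro hev
      rcases Nat.even_or_odd (p a) with ha | ha
      · have hs : Even (∑ x ∈ s, p x) := by
          simp only [Nat.even_iff, Nat.odd_iff] at ha hev ⊢; omega
        exact mul_nonneg (hE a ha) (ih.1 hs)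
      · have hs : Odd (∑ x ∈ s, p x) := by
          simp only [Nat.even_iff, Nat.odd_iff] at ha hev ⊢; omega
        nlinarith [hO a ha, ih.2 hs]
    · intro hodd
      rcases Nat.even_or_odd (p a) with ha | ha
      · have hs : Odd (∑ x ∈ s, p x) := by
          simp only [Nat.even_iff, Nat.odd_iff] at ha hodd ⊢; omega
        nlinarith [hE a ha, ih.2 hs]
      · have hs : Even (∑ x ∈ s, p x) := by
          simp only [Nat.even_iff, Nat.odd_iff] at ha hodd ⊢; omega
        nlinarith [hO a ha, ih.1 hs]

/-! ### separation of sums -/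

lemma sepP {α β : Type*} [Fintype α] [Fintype β] (f : α → ℝ) (g : β → ℝ) :
    (∑ x : α, f x) * (∑ y : β, g y) = ∑ p : α × β, f p.1 * g p.2 := by
  rw [Fintype.sum_prod_type, Finset.sum_mul_sum]

/-! ### two-copy weight identity and positivity -/

section TwoCopy

variable (n : ℕ) (J : Fin n → Fin n → ℝ) (h : Fin n → ℝ)

def c2 : (Fin n × Fin n × Bool) ⊕ Fin n → ℝ :=
  Sum.elim (fun q => J q.1 q.2.1) (fun a => 2 * h a)

def E2 : (Fin n × Fin n × Bool) ⊕ Fin n → Fin n → Bool → ℕ :=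
  Sum.elim
    (fun q => fun a' v' =>
      (if a' = q.1 ∧ v' = q.2.2 then 1 else 0) + (if a' = q.2.1 ∧ v' = q.2.2 then 1 else 0))
    (fun b => fun a' v' => if a' = b ∧ v' = false then 1 else 0)

lemma weight2 (η : Fin n → Bool × Bool) :
    isingWeight n J h (fun a => (η a).1) * isingWeight n J h (fun a => (η a).2)
      = Real.exp (∑ t, c2 n J h t * ∏ a, ∏ v, tq v (η a) ^ E2 n t a v) := by
  rw [isingWeight, isingWeight, ← Real.exp_add]
  congr 1
  rw [Fintype.sum_sum_type]
  have hL : ∀ q : Fin n × Fin n × Bool,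
      c2 n J h (Sum.inl q) * ∏ a, ∏ v, tq v (η a) ^ E2 n (Sum.inl q) a v
        = J q.1 q.2.1 * (tq q.2.2 (η q.1) * tq q.2.2 (η q.2.1)) := by
    intro q
    simp only [E2, c2, Sum.elim_inl]
    rw [prod_pow_pair (fun a v => tq v (η a)) q.1 q.2.1 q.2.2 q.2.2]
  have hR : ∀ b : Fin n,
      c2 n J h (Sum.inr b) * ∏ a, ∏ v, tq v (η a) ^ E2 n (Sum.inr b) a v
        = 2 * h b * tq false (η b) := by
    intro b
    simp only [E2, c2, Sum.elim_inr]
    rw [prod_pow_single (fun a v => tq v (η a)) b false]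
  rw [Finset.sum_congr rfl (fun q _ => hL q), Finset.sum_congr rfl (fun b _ => hR b)]
  rw [Fintype.sum_prod_type]
  have inner : ∀ a : Fin n,
      (∑ q : Fin n × Bool, J a q.1 * (tq q.2 (η a) * tq q.2 (η q.1)))
        = ∑ b : Fin n, (J a b * (tq true (η a) * tq true (η b))
            + J a b * (tq false (η a) * tq false (η b))) := by
    intro a
    rw [Fintype.sum_prod_type]
    refine Finset.sum_congr rfl fun b _ => ?_
    rw [Fintype.sum_bool]
  rw [Finset.sum_congr rfl (fun a _ => inner a)]
  simp only [Finset.mul_sum]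
  rw [add_add_add_comm, ← Finset.sum_add_distrib, ← Finset.sum_add_distrib]
  congr 1
  · refine Finset.sum_congr rfl fun a _ => ?_
    rw [← Finset.sum_add_distrib]
    refine Finset.sum_congr rfl fun b _ => ?_
    simp [tq]
    ring
  · refine Finset.sum_congr rfl fun a _ => ?_
    simp [tq]
    ring

lemma two_copy_nonneg (hJ : ∀ a b, 0 ≤ J a b) (hh : ∀ a, 0 ≤ h a) (i j : Fin n) (vi vj : Bool) :
    0 ≤ ∑ η : Fin n → Bool × Bool, (tq vi (η i) * tq vj (η j)) *
        (isingWeight n J h (fun a => (η a).1) * isingWeight n J h (fun a => (η a).2)) := by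
  have hc : ∀ t, 0 ≤ c2 n J h t := by
    rintro (⟨a, b, v⟩ | a)
    · exact hJ a b
    · have := hh a; simp [c2]; linarith
  have key := master (n := n) (V := tq)
    (g := fun a v' => (if a = i ∧ v' = vi then 1 else 0) + (if a = j ∧ v' = vj then 1 else 0))
    (c := c2 n J h) hc (E := E2 n) 1
    (fun e _ => by
      rw [one_mul]
      exact Finset.prod_nonneg fun a _ => tq_moment (e a))
  rw [one_mul] at key
  beta_reduce at key
  have keq : (∑ η : Fin n → Bool × Bool,
      (∏ a, ∏ v, tq v (η a) ^ ((if a = i ∧ v = vi then 1 else 0)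
          + (if a = j ∧ v = vj then 1 else 0))) *
        Real.exp (∑ t, c2 n J h t * ∏ a, ∏ v, tq v (η a) ^ E2 n t a v))
      = ∑ η : Fin n → Bool × Bool, (tq vi (η i) * tq vj (η j)) *
        (isingWeight n J h (fun a => (η a).1) * isingWeight n J h (fun a => (η a).2)) := by
    refine Finset.sum_congr rfl fun η _ => ?_
    rw [prod_pow_pair (fun a v => tq v (η a)) i j vi vj, weight2 n J h η]
  rw [keq] at key
  exact key

end TwoCopy

/-! ### four-copy weight identity and negativity -/

section FourCopy

variable (n : ℕ) (J : Fin n → Fin n → ℝ) (h : Fin n → ℝ)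

def c4 : (Fin n × Fin n × Fin 4) ⊕ Fin n → ℝ :=
  Sum.elim (fun q => 1 / 2 * J q.1 q.2.1) (fun a => 2 * h a)

def E4 : (Fin n × Fin n × Fin 4) ⊕ Fin n → Fin n → Fin 4 → ℕ :=
  Sum.elim
    (fun q => fun a' v' =>
      (if a' = q.1 ∧ v' = q.2.2 then 1 else 0) + (if a' = q.2.1 ∧ v' = q.2.2 then 1 else 0))
    (fun b => fun a' v' => if a' = b ∧ v' = (0 : Fin 4) then 1 else 0)

lemma weight4 (η : Fin n → (Bool × Bool) × (Bool × Bool)) :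
    isingWeight n J h (fun a => (η a).1.1) * isingWeight n J h (fun a => (η a).1.2) *
      (isingWeight n J h (fun a => (η a).2.1) * isingWeight n J h (fun a => (η a).2.2))
      = Real.exp (∑ t, c4 n J h t * ∏ a, ∏ v, uvwz v (η a) ^ E4 n t a v) := by
  rw [isingWeight, isingWeight, isingWeight, isingWeight, ← Real.exp_add, ← Real.exp_add,
    ← Real.exp_add]
  congr 1
  rw [Fintype.sum_sum_type]
  have hL : ∀ q : Fin n × Fin n × Fin 4,
      c4 n J h (Sum.inl q) * ∏ a, ∏ v, uvwz v (η a) ^ E4 n (Sum.inl q) a v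
        = 1 / 2 * J q.1 q.2.1 * (uvwz q.2.2 (η q.1) * uvwz q.2.2 (η q.2.1)) := by
    intro q
    simp only [E4, c4, Sum.elim_inl]
    rw [prod_pow_pair (fun a v => uvwz v (η a)) q.1 q.2.1 q.2.2 q.2.2]
  have hR : ∀ b : Fin n,
      c4 n J h (Sum.inr b) * ∏ a, ∏ v, uvwz v (η a) ^ E4 n (Sum.inr b) a v
        = 2 * h b * uvwz 0 (η b) := by
    intro b
    simp only [E4, c4, Sum.elim_inr]
    rw [prod_pow_single (fun a v => uvwz v (η a)) b (0 : Fin 4)]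
  rw [Finset.sum_congr rfl (fun q _ => hL q), Finset.sum_congr rfl (fun b _ => hR b)]
  rw [Fintype.sum_prod_type]
  have inner : ∀ a : Fin n,
      (∑ q : Fin n × Fin 4, 1 / 2 * J a q.1 * (uvwz q.2 (η a) * uvwz q.2 (η q.1)))
        = ∑ b : Fin n, (1 / 2 * J a b * (uvwz 0 (η a) * uvwz 0 (η b))
            + 1 / 2 * J a b * (uvwz 1 (η a) * uvwz 1 (η b))
            + 1 / 2 * J a b * (uvwz 2 (η a) * uvwz 2 (η b))
            + 1 / 2 * J a b * (uvwz 3 (η a) * uvwz 3 (η b))) := by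
    intro a
    rw [Fintype.sum_prod_type]
    refine Finset.sum_congr rfl fun b _ => ?_
    rw [Fin.sum_univ_four]
  rw [Finset.sum_congr rfl (fun a _ => inner a)]
  have hI : (∑ a, ∑ b, J a b * spin ((η a).1.1) * spin ((η b).1.1))
      + (∑ a, ∑ b, J a b * spin ((η a).1.2) * spin ((η b).1.2))
      + (∑ a, ∑ b, J a b * spin ((η a).2.1) * spin ((η b).2.1))
      + (∑ a, ∑ b, J a b * spin ((η a).2.2) * spin ((η b).2.2))
      = 2 * ∑ a, ∑ b, (1 / 2 * J a b * (uvwz 0 (η a) * uvwz 0 (η b))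
            + 1 / 2 * J a b * (uvwz 1 (η a) * uvwz 1 (η b))
            + 1 / 2 * J a b * (uvwz 2 (η a) * uvwz 2 (η b))
            + 1 / 2 * J a b * (uvwz 3 (η a) * uvwz 3 (η b))) := by
    rw [Finset.mul_sum, ← Finset.sum_add_distrib, ← Finset.sum_add_distrib,
      ← Finset.sum_add_distrib]
    refine Finset.sum_congr rfl fun a _ => ?_
    rw [Finset.mul_sum, ← Finset.sum_add_distrib, ← Finset.sum_add_distrib,
      ← Finset.sum_add_distrib]
    refine Finset.sum_congr rfl fun b _ => ?_
    simp only [uvwz, Matrix.cons_val_zero, Matrix.cons_val_one, Matrix.head_cons,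
      Matrix.cons_val_two, Matrix.tail_cons, Matrix.cons_val_three]
    ring
  have hF : (∑ a, h a * spin ((η a).1.1)) + (∑ a, h a * spin ((η a).1.2))
      + (∑ a, h a * spin ((η a).2.1)) + (∑ a, h a * spin ((η a).2.2))
      = ∑ a, 2 * h a * uvwz 0 (η a) := by
    rw [← Finset.sum_add_distrib, ← Finset.sum_add_distrib, ← Finset.sum_add_distrib]
    refine Finset.sum_congr rfl fun a _ => ?_
    simp only [uvwz, Matrix.cons_val_zero]
    ring
  linear_combination 1 / 2 * hI + hF

lemma four_copy_nonpos (hJ : ∀ a b, 0 ≤ J a b) (hh : ∀ a, 0 ≤ h a) (i j k : Fin n)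
    (vi vj : Fin 4) (hvi : (2 : Fin 4) ≠ vi) (hvj : (2 : Fin 4) ≠ vj) :
    ∑ η : Fin n → (Bool × Bool) × (Bool × Bool),
      (uvwz vi (η i) * uvwz vj (η j) * uvwz 2 (η k)) *
        (isingWeight n J h (fun a => (η a).1.1) * isingWeight n J h (fun a => (η a).1.2) *
          (isingWeight n J h (fun a => (η a).2.1) * isingWeight n J h (fun a => (η a).2.2)))
      ≤ 0 := by
  have hc : ∀ t, 0 ≤ c4 n J h t := by
    rintro (⟨a, b, v⟩ | a)
    · have := hJ a b; simp [c4]; linarith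
    · have := hh a; simp [c4]; linarith
  have hM : ∀ e : Fin n → Fin 4 → ℕ,
      (∃ (m : ℕ) (f : Fin m → (Fin n × Fin n × Fin 4) ⊕ Fin n),
        e = fun a v => ((if a = i ∧ v = vi then 1 else 0) + (if a = j ∧ v = vj then 1 else 0)
            + (if a = k ∧ v = (2 : Fin 4) then 1 else 0)) + ∑ l, E4 n (f l) a v) →
      0 ≤ (-1 : ℝ) * ∏ a, ∑ b : (Bool × Bool) × (Bool × Bool), ∏ v, uvwz v b ^ e a v := by
    rintro e ⟨m, f, rfl⟩
    beta_reduce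
    have hpar : Odd (∑ a, (((if a = i ∧ (2 : Fin 4) = vi then 1 else 0)
        + (if a = j ∧ (2 : Fin 4) = vj then 1 else 0)
        + (if a = k ∧ (2 : Fin 4) = (2 : Fin 4) then 1 else 0)) + ∑ l, E4 n (f l) a 2)) := by
      rw [Finset.sum_add_distrib]
      have h1 : (∑ a, ((if a = i ∧ (2 : Fin 4) = vi then 1 else 0)
          + (if a = j ∧ (2 : Fin 4) = vj then 1 else 0)
          + (if a = k ∧ (2 : Fin 4) = (2 : Fin 4) then 1 else 0))) = 1 := by
        simp [hvi, hvj]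
      have hev : ∀ t, Even (∑ a, E4 n t a (2 : Fin 4)) := by
        rintro (q | b)
        · simp only [E4, Sum.elim_inl, Finset.sum_add_distrib]
          by_cases hq : (2 : Fin 4) = q.2.2
          · simp [hq]
          · simp [hq]
        · simp [E4, show (2 : Fin 4) ≠ 0 by decide]
      have h2 : Even (∑ a, ∑ l, E4 n (f l) a (2 : Fin 4)) := by
        rw [Finset.sum_comm]
        exact Finset.even_sum _ fun l _ => hev (f l)
      rw [h1]
      simp only [Nat.even_iff, Nat.odd_iff] at h2 ⊢
      omega
    have hsign := (prod_sign_of_parity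
      (fun a => ∑ b : (Bool × Bool) × (Bool × Bool), ∏ v, uvwz v b ^
        (((if a = i ∧ v = vi then 1 else 0) + (if a = j ∧ v = vj then 1 else 0)
          + (if a = k ∧ v = (2 : Fin 4) then 1 else 0)) + ∑ l, E4 n (f l) a v))
      (fun a => ((if a = i ∧ (2 : Fin 4) = vi then 1 else 0)
          + (if a = j ∧ (2 : Fin 4) = vj then 1 else 0)
          + (if a = k ∧ (2 : Fin 4) = (2 : Fin 4) then 1 else 0)) + ∑ l, E4 n (f l) a 2)
      (fun a ha => uvwz_moment_even _ ha)
      (fun a ha => uvwz_moment_odd _ ha) univ).2 hpar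
    linarith [hsign]
  have key := master (n := n) (V := uvwz)
    (g := fun a v => (if a = i ∧ v = vi then 1 else 0) + (if a = j ∧ v = vj then 1 else 0)
      + (if a = k ∧ v = (2 : Fin 4) then 1 else 0))
    (c := c4 n J h) hc (E := E4 n) (-1) hM
  beta_reduce at key
  have keq : (∑ η : Fin n → (Bool × Bool) × (Bool × Bool),
      (∏ a, ∏ v, uvwz v (η a) ^ ((if a = i ∧ v = vi then 1 else 0)
          + (if a = j ∧ v = vj then 1 else 0) + (if a = k ∧ v = (2 : Fin 4) then 1 else 0))) *
        Real.exp (∑ t, c4 n J h t * ∏ a, ∏ v, uvwz v (η a) ^ E4 n t a v))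
      = ∑ η : Fin n → (Bool × Bool) × (Bool × Bool),
        (uvwz vi (η i) * uvwz vj (η j) * uvwz 2 (η k)) *
        (isingWeight n J h (fun a => (η a).1.1) * isingWeight n J h (fun a => (η a).1.2) *
          (isingWeight n J h (fun a => (η a).2.1) * isingWeight n J h (fun a => (η a).2.2))) := by
    refine Finset.sum_congr rfl fun η _ => ?_
    rw [prod_pow_triple (fun a v => uvwz v (η a)) i j k vi vj (2 : Fin 4), weight4 n J h η]
  rw [keq] at key
  linarith [key]

end FourCopy

def eqv2 (n : ℕ) : (Fin n → Bool × Bool) ≃ (Fin n → Bool) × (Fin n → Bool) :=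
  ⟨fun η => (fun a => (η a).1, fun a => (η a).2), fun p => fun a => (p.1 a, p.2 a),
    fun η => rfl, fun p => rfl⟩

def eqv4 (n : ℕ) : (Fin n → (Bool × Bool) × (Bool × Bool)) ≃
    ((Fin n → Bool) × (Fin n → Bool)) × ((Fin n → Bool) × (Fin n → Bool)) :=
  ⟨fun η => ((fun a => (η a).1.1, fun a => (η a).1.2),
      (fun a => (η a).2.1, fun a => (η a).2.2)),
    fun P => fun a => ((P.1.1 a, P.1.2 a), (P.2.1 a, P.2.2 a)),
    fun η => rfl, fun P => rfl⟩

/-! ### main theorem -/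

/-- In a ferromagnetic Ising model with nonnegative external field:
(a) covariances are nonnegative, and (b) the GHS-type third-derivative inequality holds. -/
theorem cov_nonneg_and_third_derivative_nonpos (n : ℕ) (J : Fin n → Fin n → ℝ) (h : Fin n → ℝ)
    (hsymm : ∀ a b, J a b = J b a) (hdiag : ∀ a, J a a = 0)
    (hJ : ∀ a b, 0 ≤ J a b) (hh : ∀ a, 0 ≤ h a) (i j k : Fin n) :
    (isingE n J h (fun x => spin (x i) * spin (x j))
        - isingE n J h (fun x => spin (x i)) * isingE n J h (fun x => spin (x j)) ≥ 0) ∧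
    (isingE n J h (fun x => spin (x i) * spin (x j) * spin (x k))
        - isingE n J h (fun x => spin (x i) * spin (x k)) * isingE n J h (fun x => spin (x j))
        - isingE n J h (fun x => spin (x i)) * isingE n J h (fun x => spin (x j) * spin (x k))
        - isingE n J h (fun x => spin (x i) * spin (x j)) * isingE n J h (fun x => spin (x k))
        + 2 * isingE n J h (fun x => spin (x i)) * isingE n J h (fun x => spin (x j))
            * isingE n J h (fun x => spin (x k)) ≤ 0) := by
  have hZ : 0 < ∑ x : Fin n → Bool, isingWeight n J h x := by
    refine Finset.sum_pos (fun x _ => ?_) Finset.univ_nonempty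
    rw [isingWeight]; exact Real.exp_pos _
  set W := isingWeight n J h with hW
  set Z := ∑ x : Fin n → Bool, W x with hZdef
  simp only [isingE]
  set S3 := ∑ x : Fin n → Bool, spin (x i) * spin (x j) * spin (x k) * W x with hS3
  set Sij := ∑ x : Fin n → Bool, spin (x i) * spin (x j) * W x with hSij
  set Sik := ∑ x : Fin n → Bool, spin (x i) * spin (x k) * W x with hSik
  set Sjk := ∑ x : Fin n → Bool, spin (x j) * spin (x k) * W x with hSjk
  set Si := ∑ x : Fin n → Bool, spin (x i) * W x with hSi
  set Sj := ∑ x : Fin n → Bool, spin (x j) * W x with hSj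
  set Sk := ∑ x : Fin n → Bool, spin (x k) * W x with hSk
  constructor
  · -- part (a)
    have e1 : Sij * Z = ∑ p : (Fin n → Bool) × (Fin n → Bool),
        (spin (p.1 i) * spin (p.1 j) * W p.1) * W p.2 := sepP _ _
    have e2 : Si * Sj = ∑ p : (Fin n → Bool) × (Fin n → Bool),
        (spin (p.1 i) * W p.1) * (spin (p.2 j) * W p.2) := sepP _ _
    have e3 : Sij * Z - Si * Sj = ∑ p : (Fin n → Bool) × (Fin n → Bool),
        ((spin (p.1 i) * spin (p.1 j) * W p.1) * W p.2
          - (spin (p.1 i) * W p.1) * (spin (p.2 j) * W p.2)) := by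
      rw [e1, e2, ← Finset.sum_sub_distrib]
    have e4 : Sij * Z - Si * Sj = ∑ η : Fin n → Bool × Bool,
        ((spin ((η i).1) * spin ((η j).1) * W (fun a => (η a).1)) * W (fun a => (η a).2)
          - (spin ((η i).1) * W (fun a => (η a).1))
            * (spin ((η j).2) * W (fun a => (η a).2))) := by
      rw [e3]
      exact (Equiv.sum_comp (eqv2 n) _).symm
    have e5 : Sij * Z - Si * Sj =
        2 * (∑ η : Fin n → Bool × Bool, (tq true (η i) * tq true (η j)) *
            (W (fun a => (η a).1) * W (fun a => (η a).2)))
        + 2 * (∑ η : Fin n → Bool × Bool, (tq false (η i) * tq true (η j)) *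
            (W (fun a => (η a).1) * W (fun a => (η a).2))) := by
      rw [e4, Finset.mul_sum, Finset.mul_sum, ← Finset.sum_add_distrib]
      refine Finset.sum_congr rfl fun η _ => ?_
      simp [tq]
      ring
    have hnum : 0 ≤ Sij * Z - Si * Sj := by
      rw [e5]
      have t1 := two_copy_nonneg n J h hJ hh i j true true
      have t2 := two_copy_nonneg n J h hJ hh i j false true
      rw [← hW] at t1 t2
      linarith
    have heq : Sij / Z - Si / Z * (Sj / Z) = (Sij * Z - Si * Sj) / (Z * Z) := by
      field_simp
    rw [ge_iff_le, heq]
    exact div_nonneg hnum (mul_pos hZ hZ).le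
  · -- part (b)
    -- expansions of the two-copy sums
    have hA3 : S3 * Z + Sij * Sk - Sik * Sj - Si * Sjk - Sjk * Si - Sj * Sik + Sk * Sij + Z * S3
        = 8 * ∑ p : (Fin n → Bool) × (Fin n → Bool),
            (((spin (p.1 i) - spin (p.2 i)) / 2) * ((spin (p.1 j) - spin (p.2 j)) / 2)
              * ((spin (p.1 k) + spin (p.2 k)) / 2)) * (W p.1 * W p.2) := by
      rw [hS3, hSij, hSik, hSjk, hSi, hSj, hSk, hZdef]
      rw [sepP, sepP, sepP, sepP, sepP, sepP, sepP, sepP]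
      rw [← Finset.sum_add_distrib, ← Finset.sum_sub_distrib, ← Finset.sum_sub_distrib,
        ← Finset.sum_sub_distrib, ← Finset.sum_sub_distrib, ← Finset.sum_add_distrib,
        ← Finset.sum_add_distrib, Finset.mul_sum]
      refine Finset.sum_congr rfl fun p _ => ?_
      ring
    have hA2 : Sij * Z - Si * Sj - Sj * Si + Z * Sij
        = 4 * ∑ p : (Fin n → Bool) × (Fin n → Bool),
            (((spin (p.1 i) - spin (p.2 i)) / 2) * ((spin (p.1 j) - spin (p.2 j)) / 2))
              * (W p.1 * W p.2) := by
      rw [hSij, hSi, hSj, hZdef]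
      rw [sepP, sepP, sepP, sepP]
      rw [← Finset.sum_sub_distrib, ← Finset.sum_sub_distrib, ← Finset.sum_add_distrib,
        Finset.mul_sum]
      refine Finset.sum_congr rfl fun p _ => ?_
      ring
    have hB1 : Sk * Z + Z * Sk
        = 2 * ∑ p : (Fin n → Bool) × (Fin n → Bool),
            ((spin (p.1 k) + spin (p.2 k)) / 2) * (W p.1 * W p.2) := by
      rw [hSk, hZdef]
      rw [sepP, sepP]
      rw [← Finset.sum_add_distrib, Finset.mul_sum]
      refine Finset.sum_congr rfl fun p _ => ?_
      ring
    set A3 := ∑ p : (Fin n → Bool) × (Fin n → Bool),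
        (((spin (p.1 i) - spin (p.2 i)) / 2) * ((spin (p.1 j) - spin (p.2 j)) / 2)
          * ((spin (p.1 k) + spin (p.2 k)) / 2)) * (W p.1 * W p.2) with hA3def
    set A2 := ∑ p : (Fin n → Bool) × (Fin n → Bool),
        (((spin (p.1 i) - spin (p.2 i)) / 2) * ((spin (p.1 j) - spin (p.2 j)) / 2))
          * (W p.1 * W p.2) with hA2def
    set B1 := ∑ p : (Fin n → Bool) × (Fin n → Bool),
        ((spin (p.1 k) + spin (p.2 k)) / 2) * (W p.1 * W p.2) with hB1def
    have hN : A3 * (Z * Z) - A2 * B1 ≤ 0 := by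
      have hZZ : Z * Z = ∑ p : (Fin n → Bool) × (Fin n → Bool), W p.1 * W p.2 := sepP _ _
      rw [hZZ, hA3def, hA2def, hB1def, sepP, sepP, ← Finset.sum_sub_distrib]
      have swap : (∑ P : ((Fin n → Bool) × (Fin n → Bool)) × ((Fin n → Bool) × (Fin n → Bool)),
          ((((spin (P.1.1 i) - spin (P.1.2 i)) / 2) * ((spin (P.1.1 j) - spin (P.1.2 j)) / 2)
              * ((spin (P.1.1 k) + spin (P.1.2 k)) / 2)) * (W P.1.1 * W P.1.2)
                * (W P.2.1 * W P.2.2)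
            - ((((spin (P.1.1 i) - spin (P.1.2 i)) / 2)
                * ((spin (P.1.1 j) - spin (P.1.2 j)) / 2)) * (W P.1.1 * W P.1.2))
              * (((spin (P.2.1 k) + spin (P.2.2 k)) / 2) * (W P.2.1 * W P.2.2))))
          = ∑ η : Fin n → (Bool × Bool) × (Bool × Bool),
          ((((spin ((η i).1.1) - spin ((η i).1.2)) / 2)
              * ((spin ((η j).1.1) - spin ((η j).1.2)) / 2)
              * ((spin ((η k).1.1) + spin ((η k).1.2)) / 2))
                * (W (fun a => (η a).1.1) * W (fun a => (η a).1.2))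
                * (W (fun a => (η a).2.1) * W (fun a => (η a).2.2))
            - ((((spin ((η i).1.1) - spin ((η i).1.2)) / 2)
                * ((spin ((η j).1.1) - spin ((η j).1.2)) / 2))
                  * (W (fun a => (η a).1.1) * W (fun a => (η a).1.2)))
              * (((spin ((η k).2.1) + spin ((η k).2.2)) / 2)
                  * (W (fun a => (η a).2.1) * W (fun a => (η a).2.2)))) :=
        (Equiv.sum_comp (eqv4 n) _).symm
      rw [swap]
      have point : ∀ η : Fin n → (Bool × Bool) × (Bool × Bool),
          ((((spin ((η i).1.1) - spin ((η i).1.2)) / 2)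
              * ((spin ((η j).1.1) - spin ((η j).1.2)) / 2)
              * ((spin ((η k).1.1) + spin ((η k).1.2)) / 2))
                * (W (fun a => (η a).1.1) * W (fun a => (η a).1.2))
                * (W (fun a => (η a).2.1) * W (fun a => (η a).2.2))
            - ((((spin ((η i).1.1) - spin ((η i).1.2)) / 2)
                * ((spin ((η j).1.1) - spin ((η j).1.2)) / 2))
                  * (W (fun a => (η a).1.1) * W (fun a => (η a).1.2)))
              * (((spin ((η k).2.1) + spin ((η k).2.2)) / 2)
                  * (W (fun a => (η a).2.1) * W (fun a => (η a).2.2))))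
          = 1 / 4 * ((uvwz 1 (η i) * uvwz 1 (η j) * uvwz 2 (η k)) *
              (W (fun a => (η a).1.1) * W (fun a => (η a).1.2) *
                (W (fun a => (η a).2.1) * W (fun a => (η a).2.2)))
            + (uvwz 1 (η i) * uvwz 3 (η j) * uvwz 2 (η k)) *
              (W (fun a => (η a).1.1) * W (fun a => (η a).1.2) *
                (W (fun a => (η a).2.1) * W (fun a => (η a).2.2)))
            + (uvwz 3 (η i) * uvwz 1 (η j) * uvwz 2 (η k)) *
              (W (fun a => (η a).1.1) * W (fun a => (η a).1.2) *
                (W (fun a => (η a).2.1) * W (fun a => (η a).2.2)))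
            + (uvwz 3 (η i) * uvwz 3 (η j) * uvwz 2 (η k)) *
              (W (fun a => (η a).1.1) * W (fun a => (η a).1.2) *
                (W (fun a => (η a).2.1) * W (fun a => (η a).2.2)))) := by
        intro η
        simp only [uvwz, Matrix.cons_val_zero, Matrix.cons_val_one, Matrix.head_cons,
          Matrix.cons_val_two, Matrix.tail_cons, Matrix.cons_val_three]
        ring
      rw [Finset.sum_congr rfl fun η _ => point η]
      rw [← Finset.mul_sum, Finset.sum_add_distrib, Finset.sum_add_distrib,
        Finset.sum_add_distrib]
      have m11 := four_copy_nonpos n J h hJ hh i j k 1 1 (by decide) (by decide)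
      have m13 := four_copy_nonpos n J h hJ hh i j k 1 3 (by decide) (by decide)
      have m31 := four_copy_nonpos n J h hJ hh i j k 3 1 (by decide) (by decide)
      have m33 := four_copy_nonpos n J h hJ hh i j k 3 3 (by decide) (by decide)
      rw [← hW] at m11 m13 m31 m33
      nlinarith [m11, m13, m31, m33]
    have hfin : S3 * (Z * Z * Z) - Sik * Sj * (Z * Z) - Si * Sjk * (Z * Z)
        - Sij * Sk * (Z * Z) + 2 * (Si * Sj * Sk * Z) = 4 * (A3 * (Z * Z) - A2 * B1) := by
      linear_combination (Z * Z / 2) * hA3 + (-(Sk * Z)) * hA2 + (-(2 * A2)) * hB1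
    have heq : S3 / Z - Sik / Z * (Sj / Z) - Si / Z * (Sjk / Z) - Sij / Z * (Sk / Z)
        + 2 * (Si / Z) * (Sj / Z) * (Sk / Z)
        = (4 * (A3 * (Z * Z) - A2 * B1)) / (Z * Z * Z * Z) := by
      rw [← hfin]
      field_simp
    rw [heq]
    exact div_nonpos_of_nonpos_of_nonneg (by linarith)
      (mul_pos (mul_pos (mul_pos hZ hZ) hZ) hZ).le
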